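/- Let a, b, c, d ∈ ℂ be four pairwise distinct points lying on a common circle (or line), such that d is the reflection of a across the perpendicular bisector of the segment [b, c], with a and d on the same arc determined by b and c. Then the cross-ratio cr(a,b,d,c) = ((a-b)(d-c))/((b-d)(c-a)) is real and positive, and equals |a-b|²/|b-d|². -/

import Mathlib

/-- The cross-ratio of four complex numbers. -/
noncomputable def cr (a b c d : ℂ) : ℂ := ((a - b) * (c - d)) / ((b - c) * (d - a))

/-- Reflection of `w` across the perpendicular bisector of the segment `[u, v]`:
the unique orientation-reversing isometry of `ℂ` exchanging `u` and `v` and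
fixing the bisector pointwise. -/
noncomputable def perpBisectorReflect (u v w : ℂ) : ℂ :=
  (u + v) / 2 - ((v - u) / (starRingEnd ℂ) (v - u)) * (starRingEnd ℂ) (w - (u + v) / 2)

/-- If `d` is the reflection of `a` across the perpendicular bisector of `[b,c]`
(so that `a, b, c, d` lie on a common circle or line, `a` and `d` on the same
arc), then the cross-ratio `cr(a,b,d,c)` is real positive and equals
`|a-b|²/|b-d|²`. -/
theorem reflected_cross_ratio (a b c d : ℂ)
    (hab : a ≠ b) (hac : a ≠ c) (had : a ≠ d)
    (hbc : b ≠ c) (hbd : b ≠ d) (hcd : c ≠ d)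
    (hd : d = perpBisectorReflect b c a) :
    cr a b d c = (‖a - b‖ ^ 2 / ‖b - d‖ ^ 2 : ℝ) ∧
    (0 : ℝ) < ‖a - b‖ ^ 2 / ‖b - d‖ ^ 2 := by
  have hcb : c - b ≠ 0 := sub_ne_zero.mpr (Ne.symm hbc)
  have hca : c - a ≠ 0 := sub_ne_zero.mpr (Ne.symm hac)
  have hba : a - b ≠ 0 := sub_ne_zero.mpr hab
  have e : (starRingEnd ℂ) (a - (b + c) / 2)
      = (starRingEnd ℂ) (a - b) - (starRingEnd ℂ) (c - b) / 2 := by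
    rw [show a - (b + c) / 2 = (a - b) - (c - b) / 2 from by ring, map_sub, map_div₀]
    simp [Complex.conj_ofNat]
  have e' : (starRingEnd ℂ) (a - (b + c) / 2)
      = (starRingEnd ℂ) (c - b) / 2 - (starRingEnd ℂ) (c - a) := by
    rw [show a - (b + c) / 2 = (c - b) / 2 - (c - a) from by ring, map_sub, map_div₀]
    simp [Complex.conj_ofNat]
  set p : ℂ := (starRingEnd ℂ) (c - b) with hp
  set q : ℂ := (starRingEnd ℂ) (a - b) with hq
  set r : ℂ := (starRingEnd ℂ) (c - a) with hr
  have hpz : p ≠ 0 := by rw [hp, map_ne_zero]; exact hcb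
  have hqz : q ≠ 0 := by rw [hq, map_ne_zero]; exact hba
  have hrz : r ≠ 0 := by rw [hr, map_ne_zero]; exact hca
  set k : ℂ := (c - b) / p with hk
  have hknz : k ≠ 0 := div_ne_zero hcb hpz
  have h1 : d - c = -k * q := by
    rw [hd]; unfold perpBisectorReflect
    rw [e, ← hp, hk]
    field_simp
    ring
  have h2 : b - d = -k * r := by
    rw [hd]; unfold perpBisectorReflect
    rw [e', ← hp, hk]
    field_simp
    ring
  have hnk : Complex.normSq k = 1 := by
    rw [hk, Complex.normSq_div, hp, Complex.normSq_conj, div_self]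
    simpa using hcb
  have habs : ‖b - d‖ ^ 2 = ‖c - a‖ ^ 2 := by
    rw [Complex.sq_norm, Complex.sq_norm, h2, Complex.normSq_mul, Complex.normSq_neg, hnk,
      one_mul, hr, Complex.normSq_conj]
  have hcr : cr a b d c = ((a - b) * q) / ((c - a) * r) := by
    unfold cr
    rw [h1, h2]
    field_simp
  constructor
  · rw [hcr, habs, hq, hr, Complex.mul_conj, Complex.mul_conj, Complex.sq_norm, Complex.sq_norm]
    push_cast
    ring
  · rw [habs]
    exact div_pos (pow_pos (norm_pos_iff.mpr hba) 2) (pow_pos (norm_pos_iff.mpr hca) 2)
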